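/- Declarative and RPN proof formats are equivalent: an expression has a declarative proof (a finite sequence of steps, each an expression justified by an assertion and references to earlier steps or hypotheses) if and only if it has an RPN proof. -/

import Mathlib

/-- Expressions built from variables and symbols with fixed arities. -/
inductive Term (Sym : Type) (ar : Sym → ℕ) : Type
  | var : ℕ → Term Sym ar
  | app : (s : Sym) → (Fin (ar s) → Term Sym ar) → Term Sym ar

/-- Apply a substitution homomorphically. -/
def Term.subst {Sym : Type} {ar : Sym → ℕ} (σ : ℕ → Term Sym ar) :
    Term Sym ar → Term Sym ar
  | .var n => σ n
  | .app s a => .app s (fun i => Term.subst σ (a i))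

/-- An assertion (rule schema): a finite list of hypothesis expressions
and a conclusion expression over variables. -/
structure Assertion (Sym : Type) (ar : Sym → ℕ) : Type where
  hyps : List (Term Sym ar)
  concl : Term Sym ar

/-- Derivability from a set `S` of assertions and a set `H` of hypothesis
expressions: the inductive closure under hypotheses and `σ`-instances of
assertions whose `σ`-instantiated hypotheses are all derivable. -/
inductive Deriv {Sym : Type} {ar : Sym → ℕ}
    (S : Set (Assertion Sym ar)) (H : Set (Term Sym ar)) :
    Term Sym ar → Prop
  | hyp {e} : e ∈ H → Deriv S H e
  | app {A : Assertion Sym ar} {σ : ℕ → Term Sym ar} :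
      A ∈ S → (∀ h ∈ A.hyps, Deriv S H (h.subst σ)) →
      Deriv S H (A.concl.subst σ)

/-- A step of an RPN (Metamath-style) proof: either push a hypothesis
expression, or apply an assertion with a substitution. -/
inductive Step (Sym : Type) (ar : Sym → ℕ) : Type
  | hyp : Term Sym ar → Step Sym ar
  | app : Assertion Sym ar → (ℕ → Term Sym ar) → Step Sym ar

attribute [local instance] Classical.propDecidable

/-- Evaluate one RPN step on a stack of expressions.  A hypothesis step
pushes its expression; an assertion step pops the `σ`-instantiated
hypotheses (in order, topmost first) and pushes the `σ`-instance of the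
conclusion.  Returns `none` if the stack does not match. -/
noncomputable def evalStep {Sym : Type} {ar : Sym → ℕ} :
    Step Sym ar → List (Term Sym ar) → Option (List (Term Sym ar))
  | .hyp e, st => some (e :: st)
  | .app A σ, st =>
      let n := A.hyps.length
      if st.take n = (A.hyps.map (Term.subst σ)).reverse then
        some (A.concl.subst σ :: st.drop n)
      else none

/-- Evaluate a list of RPN steps on a stack. -/
noncomputable def evalProof {Sym : Type} {ar : Sym → ℕ} :
    List (Step Sym ar) → List (Term Sym ar) →
      Option (List (Term Sym ar))
  | [], st => some st
  | s :: p, st => (evalStep s st).bind (evalProof p)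

/-- A declarative (Russell-style) proof over assertions `S` and hypotheses
`H`: a list of expressions `p₁, …, pₙ` where each `pᵢ` is either a
hypothesis or the `σ`-instance of the conclusion of some assertion of `S`
whose `σ`-instantiated hypotheses all occur among `p₁, …, p_{i-1}` or the
hypotheses. -/
def DeclProof {Sym : Type} {ar : Sym → ℕ}
    (S : Set (Assertion Sym ar)) (H : Set (Term Sym ar))
    (L : List (Term Sym ar)) : Prop :=
  ∀ i : Fin L.length,
    L.get i ∈ H ∨
    ∃ A ∈ S, ∃ σ : ℕ → Term Sym ar,
      L.get i = A.concl.subst σ ∧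
      ∀ h ∈ A.hyps, h.subst σ ∈ H ∨ h.subst σ ∈ L.take i

section Aux
variable {Sym : Type} {ar : Sym → ℕ} {S : Set (Assertion Sym ar)} {H : Set (Term Sym ar)}

theorem mem_of_getLast?_eq {α : Type*} {l : List α} {x : α} (h : l.getLast? = some x) :
    x ∈ l := by
  obtain ⟨h', rfl⟩ := List.mem_getLast?_eq_getLast h
  exact List.getLast_mem h'

theorem evalProof_append (p q : List (Step Sym ar)) (st : List (Term Sym ar)) :
    evalProof (p ++ q) st = (evalProof p st).bind (evalProof q) := by
  induction p generalizing st with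
  | nil => simp [evalProof]
  | cons s p ih =>
    simp only [List.cons_append, evalProof]
    cases evalStep s st <;> simp [ih]

theorem deriv_rpn {e : Term Sym ar} (hd : Deriv S H e) :
    ∃ p : List (Step Sym ar),
      (∀ x, Step.hyp x ∈ p → x ∈ H) ∧ (∀ A σ, Step.app A σ ∈ p → A ∈ S) ∧
      ∀ st, evalProof p st = some (e :: st) := by
  induction hd with
  | hyp he =>
    exact ⟨[.hyp _], by simpa using he, by simp, fun st => by simp [evalProof, evalStep]⟩
  | @app A σ hA hhyps ih =>
    have key : ∀ l : List (Term Sym ar), (∀ h ∈ l, h ∈ A.hyps) →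
        ∃ q : List (Step Sym ar),
          (∀ x, Step.hyp x ∈ q → x ∈ H) ∧ (∀ B τ, Step.app B τ ∈ q → B ∈ S) ∧
          ∀ st, evalProof q st = some ((l.map (Term.subst σ)).reverse ++ st) := by
      intro l hl
      induction l with
      | nil => exact ⟨[], by simp, by simp, fun st => by simp [evalProof]⟩
      | cons h t iht =>
        obtain ⟨q, a1, a2, a3⟩ := iht (fun x hx => hl x (List.mem_cons_of_mem _ hx))
        obtain ⟨r, b1, b2, b3⟩ := ih h (hl h List.mem_cons_self)
        refine ⟨r ++ q, ?_, ?_, fun st => ?_⟩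
        · intro x hx; rcases List.mem_append.1 hx with hx | hx
          · exact b1 x hx
          · exact a1 x hx
        · intro B τ hx; rcases List.mem_append.1 hx with hx | hx
          · exact b2 B τ hx
          · exact a2 B τ hx
        · rw [evalProof_append, b3, Option.bind_some, a3]
          simp
    obtain ⟨q, a1, a2, a3⟩ := key A.hyps (fun _ h => h)
    refine ⟨q ++ [.app A σ], ?_, ?_, fun st => ?_⟩
    · intro x hx; rcases List.mem_append.1 hx with hx | hx
      · exact a1 x hx
      · simp at hx
    · intro B τ hx; rcases List.mem_append.1 hx with hx | hx
      · exact a2 B τ hx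
      · simp at hx; exact hx.1 ▸ hA
    · rw [evalProof_append, a3, Option.bind_some]
      have hlen : ((A.hyps.map (Term.subst σ)).reverse).length = A.hyps.length := by simp
      simp only [evalProof, evalStep]
      rw [← hlen, List.take_left, List.drop_left]
      simp [evalProof]

theorem rpn_deriv (p : List (Step Sym ar)) :
    ∀ (st st' : List (Term Sym ar)),
    (∀ x, Step.hyp x ∈ p → x ∈ H) → (∀ A σ, Step.app A σ ∈ p → A ∈ S) →
    evalProof p st = some st' → (∀ x ∈ st, Deriv S H x) → ∀ x ∈ st', Deriv S H x := by
  induction p with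
  | nil => intro st st' _ _ hev hst; simp [evalProof] at hev; exact hev ▸ hst
  | cons s p ih =>
    intro st st' h1 h2 hev hst
    cases s with
    | hyp a =>
      simp only [evalProof, evalStep, Option.bind_some] at hev
      refine ih (a :: st) st' (fun x hx => h1 x (List.mem_cons_of_mem _ hx))
        (fun A σ hx => h2 A σ (List.mem_cons_of_mem _ hx)) hev ?_
      intro x hx
      rcases List.mem_cons.1 hx with rfl | hx
      · exact .hyp (h1 x List.mem_cons_self)
      · exact hst x hx
    | app A σ =>
      simp only [evalProof, evalStep] at hev
      split at hev
      · next hcond =>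
        simp only [Option.bind_some] at hev
        refine ih _ st' (fun x hx => h1 x (List.mem_cons_of_mem _ hx))
          (fun B τ hx => h2 B τ (List.mem_cons_of_mem _ hx)) hev ?_
        intro x hx
        rcases List.mem_cons.1 hx with rfl | hx
        · refine Deriv.app (h2 A σ List.mem_cons_self) ?_
          intro h hm
          refine hst _ (List.mem_of_mem_take (l := st) (i := A.hyps.length) ?_)
          rw [hcond]
          simp only [List.mem_reverse, List.mem_map]
          exact ⟨h, hm, rfl⟩
        · exact hst x (List.mem_of_mem_drop hx)
      · simp at hev

theorem decl_deriv (L : List (Term Sym ar)) (hL : DeclProof S H L) :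
    ∀ i : Fin L.length, Deriv S H (L.get i) := by
  intro ⟨i, hi⟩
  induction i using Nat.strong_induction_on with
  | _ i IH =>
    rcases hL ⟨i, hi⟩ with h | ⟨A, hA, σ, hc, hh⟩
    · exact .hyp h
    · rw [List.get_eq_getElem] at hc ⊢
      rw [hc]
      refine Deriv.app hA ?_
      intro h hm
      rcases hh h hm with h1 | h2
      · exact .hyp h1
      · obtain ⟨j, hj, hje⟩ := List.getElem_of_mem h2
        have hjlt : j < i := lt_of_lt_of_le hj (by simp [List.length_take])
        have hjL : j < L.length := lt_trans hjlt hi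
        rw [List.getElem_take] at hje
        exact hje ▸ IH j hjlt hjL

theorem declProof_append {L1 L2 : List (Term Sym ar)}
    (h1 : DeclProof S H L1) (h2 : DeclProof S H L2) : DeclProof S H (L1 ++ L2) := by
  intro ⟨i, hi⟩
  simp only [List.get_eq_getElem]
  by_cases hlt : i < L1.length
  · rcases h1 ⟨i, hlt⟩ with h | ⟨A, hA, σ, hc, hh⟩
    · left; rwa [List.getElem_append_left hlt]
    · right
      refine ⟨A, hA, σ, ?_, ?_⟩
      · rw [List.getElem_append_left hlt]; rw [List.get_eq_getElem] at hc; exact hc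
      · intro h hm
        rcases hh h hm with h' | h'
        · exact Or.inl h'
        · right
          rw [List.take_append_of_le_length (le_of_lt hlt)]
          exact h'
  · push_neg at hlt
    obtain ⟨j, rfl⟩ := Nat.exists_eq_add_of_le hlt
    have hjlt : j < L2.length := by
      simp [List.length_append] at hi; omega
    rcases h2 ⟨j, hjlt⟩ with h | ⟨A, hA, σ, hc, hh⟩
    · left
      rw [List.getElem_append_right hlt]
      rw [List.get_eq_getElem] at h
      simpa using h
    · right
      refine ⟨A, hA, σ, ?_, ?_⟩
      · rw [List.getElem_append_right hlt]
        simpa using hc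
      · intro h hm
        rcases hh h hm with h' | h'
        · exact Or.inl h'
        · right
          rw [List.take_append]
          exact List.mem_append_right _ (by simpa using h')

theorem deriv_decl {e : Term Sym ar} (hd : Deriv S H e) :
    ∃ L : List (Term Sym ar), DeclProof S H L ∧ L.getLast? = some e := by
  induction hd with
  | @hyp e he =>
    refine ⟨[e], ?_, rfl⟩
    intro ⟨i, hi⟩
    obtain rfl : i = 0 := Nat.lt_one_iff.1 hi
    exact Or.inl he
  | @app A σ hA hhyps ih =>
    have key : ∀ l : List (Term Sym ar), (∀ h ∈ l, h ∈ A.hyps) →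
        ∃ M : List (Term Sym ar), DeclProof S H M ∧ ∀ h ∈ l, h.subst σ ∈ M := by
      intro l hl
      induction l with
      | nil => exact ⟨[], fun i => absurd i.isLt (by simp), by simp⟩
      | cons h t iht =>
        obtain ⟨M, a1, a2⟩ := iht (fun x hx => hl x (List.mem_cons_of_mem _ hx))
        obtain ⟨L, b1, b2⟩ := ih h (hl h List.mem_cons_self)
        refine ⟨L ++ M, declProof_append b1 a1, ?_⟩
        intro x hx
        rcases List.mem_cons.1 hx with rfl | hx
        · exact List.mem_append_left _ (mem_of_getLast?_eq b2)
        · exact List.mem_append_right _ (a2 x hx)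
    obtain ⟨M, a1, a2⟩ := key A.hyps (fun _ h => h)
    refine ⟨M ++ [A.concl.subst σ], ?_, by simp⟩
    intro ⟨i, hi⟩
    simp only [List.get_eq_getElem]
    by_cases hlt : i < M.length
    · rcases a1 ⟨i, hlt⟩ with h | ⟨B, hB, τ, hc, hh⟩
      · left; rwa [List.getElem_append_left hlt]
      · right
        refine ⟨B, hB, τ, ?_, ?_⟩
        · rw [List.getElem_append_left hlt]; rw [List.get_eq_getElem] at hc; exact hc
        · intro h hm
          rcases hh h hm with h' | h'
          · exact Or.inl h'
          · right
            rw [List.take_append_of_le_length (le_of_lt hlt)]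
            exact h'
    · push_neg at hlt
      have : i = M.length := by
        simp [List.length_append] at hi; omega
      subst this
      right
      refine ⟨A, hA, σ, ?_, ?_⟩
      · rw [List.getElem_append_right (le_refl _)]; simp
      · intro h hm
        right
        rw [List.take_left]
        exact a2 h hm

end Aux

/-- Equivalence of the declarative and RPN proof formats: an expression has
a declarative proof (ending in that expression) iff it has an RPN proof
(evaluating on the empty stack to exactly that expression). -/
theorem decl_iff_rpn {Sym : Type} {ar : Sym → ℕ}
    (S : Set (Assertion Sym ar)) (H : Set (Term Sym ar))
    (e : Term Sym ar) :
    (∃ L : List (Term Sym ar), DeclProof S H L ∧ L.getLast? = some e) ↔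
    (∃ p : List (Step Sym ar),
      (∀ x, Step.hyp x ∈ p → x ∈ H) ∧
      (∀ A σ, Step.app A σ ∈ p → A ∈ S) ∧
      evalProof p [] = some [e]) := by
  constructor
  · rintro ⟨L, hL, hlast⟩
    obtain ⟨i, hi, hie⟩ := List.getElem_of_mem (mem_of_getLast?_eq hlast)
    have hd : Deriv S H e := by
      have := decl_deriv L hL ⟨i, hi⟩
      rwa [List.get_eq_getElem, hie] at this
    obtain ⟨p, h1, h2, h3⟩ := deriv_rpn hd
    exact ⟨p, h1, h2, h3 []⟩
  · rintro ⟨p, h1, h2, h3⟩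
    have hd : Deriv S H e :=
      rpn_deriv p [] [e] h1 h2 h3 (by simp) e (List.mem_singleton_self _)
    exact deriv_decl hd
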